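/- A closed subspace J of L¹(ℝ) is an ideal in the Banach algebra (L¹(ℝ), ⋆_A) if and only if it is invariant under all A-translations T^A_x, x ∈ ℝ. -/

import Mathlib

open MeasureTheory

/-- The `A`-translation `T^A_x f(t) = e^{-i(a/b)x(t-x)} f(t-x)`. -/
noncomputable def Atrans (a b x : ℝ) (f : ℝ → ℂ) (t : ℝ) : ℂ :=
  Complex.exp (-Complex.I * ((a : ℂ) / b) * x * ((t : ℂ) - x)) * f (t - x)

/-- The `A`-convolution of two functions. -/
noncomputable def convA (a b : ℝ) (g f : ℝ → ℂ) (t : ℝ) : ℂ :=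
  (Real.sqrt (2 * Real.pi * |b|) : ℂ)⁻¹ * ∫ s : ℝ, g s * Atrans a b s f t

namespace AtransAux

open Complex Filter MeasureTheory Topology


open Complex Filter MeasureTheory

lemma norm_atrans_exp (a b x t : ℝ) :
    ‖Complex.exp (-Complex.I * ((a : ℂ) / b) * x * ((t : ℂ) - x))‖ = 1 := by
  have h : -Complex.I * ((a : ℂ) / b) * x * ((t : ℂ) - x)
      = ((-(a / b * x * (t - x)) : ℝ) : ℂ) * Complex.I := by
    push_cast; ring
  rw [h, Complex.norm_exp_ofReal_mul_I]

lemma atrans_norm (a b x : ℝ) (f : ℝ → ℂ) (t : ℝ) :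
    ‖Atrans a b x f t‖ = ‖f (t - x)‖ := by
  rw [Atrans, norm_mul, norm_atrans_exp, one_mul]

lemma atrans_integrable (a b x : ℝ) {f : ℝ → ℂ} (hf : Integrable f) :
    Integrable (Atrans a b x f) := by
  have h := (hf.comp_sub_right x).bdd_mul
    (Complex.continuous_exp.comp (by fun_prop)).aestronglyMeasurable
    (c := 1) (Eventually.of_forall fun t => le_of_eq (norm_atrans_exp a b x t))
  exact h

lemma atrans_norm_integral (a b x : ℝ) (f : ℝ → ℂ) :
    ∫ t, ‖Atrans a b x f t‖ = ∫ t, ‖f t‖ := by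
  simp_rw [atrans_norm]
  exact integral_sub_right_eq_self (fun t => ‖f t‖) x



/-- chirp multiplication -/
noncomputable def chirp (c : ℝ) (f : ℝ → ℂ) (u : ℝ) : ℂ :=
  Complex.exp (Complex.I * (c : ℂ) * (u : ℂ) ^ 2) * f u

lemma norm_chirp_exp (c u : ℝ) : ‖Complex.exp (Complex.I * (c : ℂ) * (u : ℂ) ^ 2)‖ = 1 := by
  have h : Complex.I * (c : ℂ) * (u : ℂ) ^ 2 = ((c * u ^ 2 : ℝ) : ℂ) * Complex.I := by
    push_cast; ring
  rw [h, Complex.norm_exp_ofReal_mul_I]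

lemma chirp_integrable (c : ℝ) {f : ℝ → ℂ} (hf : Integrable f) :
    Integrable (chirp c f) :=
  hf.bdd_mul (Complex.continuous_exp.comp (by fun_prop)).aestronglyMeasurable
    (c := 1) (Eventually.of_forall fun u => le_of_eq (norm_chirp_exp c u))

lemma integrand_eq {a b : ℝ} (hb : b ≠ 0) (g f : ℝ → ℂ) (s t : ℝ) :
    g s * Atrans a b s f t
      = Complex.exp (-(Complex.I * ((a / (2 * b) : ℝ) : ℂ) * (t : ℂ) ^ 2)) *
        (chirp (a / (2 * b)) g s * chirp (a / (2 * b)) f (t - s)) := by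
  have hbC : (b : ℂ) ≠ 0 := by exact_mod_cast hb
  rw [Atrans, chirp, chirp]
  rw [show ((t - s : ℝ) : ℂ) = (t : ℂ) - s by push_cast; ring]
  rw [show (Complex.exp (-(Complex.I * ((a / (2 * b) : ℝ) : ℂ) * (t : ℂ) ^ 2)) *
      (Complex.exp (Complex.I * ((a / (2 * b) : ℝ) : ℂ) * (s : ℂ) ^ 2) * g s *
        (Complex.exp (Complex.I * ((a / (2 * b) : ℝ) : ℂ) * ((t : ℂ) - s) ^ 2) * f (t - s)))) =
      (Complex.exp (-(Complex.I * ((a / (2 * b) : ℝ) : ℂ) * (t : ℂ) ^ 2)) *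
        Complex.exp (Complex.I * ((a / (2 * b) : ℝ) : ℂ) * (s : ℂ) ^ 2) *
        Complex.exp (Complex.I * ((a / (2 * b) : ℝ) : ℂ) * ((t : ℂ) - s) ^ 2)) *
        (g s * f (t - s)) from by ring]
  rw [← Complex.exp_add, ← Complex.exp_add]
  rw [show g s * (Complex.exp (-Complex.I * ((a : ℂ) / b) * s * ((t : ℂ) - s)) * f (t - s))
      = Complex.exp (-Complex.I * ((a : ℂ) / b) * s * ((t : ℂ) - s)) * (g s * f (t - s)) from by
        ring]
  congr 2
  push_cast
  field_simp
  ring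

lemma prod_integrable {a b : ℝ} (hb : b ≠ 0) {g f : ℝ → ℂ}
    (hg : Integrable g) (hf : Integrable f) :
    Integrable (fun p : ℝ × ℝ => g p.2 * Atrans a b p.2 f p.1)
      ((volume : Measure ℝ).prod volume) := by
  have hconv := (chirp_integrable (a / (2 * b)) hg).convolution_integrand
    (ContinuousLinearMap.mul ℂ ℂ) (chirp_integrable (a / (2 * b)) hf)
  have h2 := hconv.bdd_mul
    (f := fun p : ℝ × ℝ => Complex.exp (-(Complex.I * ((a / (2 * b) : ℝ) : ℂ) * (p.1 : ℂ) ^ 2)))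
    (Complex.continuous_exp.comp (by fun_prop)).aestronglyMeasurable
    (c := 1) (Eventually.of_forall fun p => by
      have h : -(Complex.I * ((a / (2 * b) : ℝ) : ℂ) * (p.1 : ℂ) ^ 2)
          = ((-(a / (2 * b) * p.1 ^ 2) : ℝ) : ℂ) * Complex.I := by push_cast; ring
      show ‖Complex.exp _‖ ≤ 1
      rw [h, Complex.norm_exp_ofReal_mul_I])
  have heq : (fun p : ℝ × ℝ => g p.2 * Atrans a b p.2 f p.1)
      = fun p : ℝ × ℝ =>
        Complex.exp (-(Complex.I * ((a / (2 * b) : ℝ) : ℂ) * (p.1 : ℂ) ^ 2)) *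
          ((ContinuousLinearMap.mul ℂ ℂ) (chirp (a / (2 * b)) g p.2)
            (chirp (a / (2 * b)) f (p.1 - p.2))) := by
    funext p
    simpa using integrand_eq hb g f p.2 p.1
  rw [heq]
  exact h2

lemma integral_integrand_integrable {a b : ℝ} (hb : b ≠ 0) {g f : ℝ → ℂ}
    (hg : Integrable g) (hf : Integrable f) :
    Integrable (fun t => ∫ s, g s * Atrans a b s f t) :=
  (prod_integrable hb hg hf).integral_prod_left



/-- continuity of translation in L¹, for continuous compactly supported functions -/
lemma tendsto_translation_cont {g : ℝ → ℂ} (hgc : Continuous g) (hgs : HasCompactSupport g) :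
    Tendsto (fun v : ℝ => ∫ t, ‖g (t - v) - g t‖) (𝓝 0) (𝓝 0) := by
  obtain ⟨M, hM⟩ : ∃ M, ∀ t, ‖g t‖ ≤ M := by
    obtain ⟨C, hC⟩ := hgs.exists_bound_of_continuous hgc
    exact ⟨C, hC⟩
  have hK : IsCompact (Metric.cthickening 1 (tsupport g)) := hgs.cthickening
  have h0 : (fun v : ℝ => ∫ t, ‖g (t - v) - g t‖) =ᶠ[𝓝 (0:ℝ)]
      (fun v : ℝ => ∫ t, ‖g (t - v) - g t‖) := EventuallyEq.rfl
  have := tendsto_integral_filter_of_dominated_convergence (μ := (volume : Measure ℝ))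
    (F := fun (v : ℝ) (t : ℝ) => ‖g (t - v) - g t‖) (f := fun _ => (0 : ℝ))
    (bound := Set.indicator (Metric.cthickening 1 (tsupport g)) (fun _ => 2 * M))
    (l := 𝓝 (0:ℝ))
    (Eventually.of_forall fun v =>
      (((hgc.comp (continuous_id.sub continuous_const)).sub hgc).norm).aestronglyMeasurable)
    ?_ ?_ ?_
  · simpa using this
  · filter_upwards [Metric.ball_mem_nhds (0:ℝ) one_pos] with v hv
    refine Eventually.of_forall fun t => ?_
    rw [Real.norm_of_nonneg (norm_nonneg _)]
    by_cases ht : t ∈ Metric.cthickening 1 (tsupport g)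
    · rw [Set.indicator_of_mem ht]
      calc ‖g (t - v) - g t‖ ≤ ‖g (t - v)‖ + ‖g t‖ := norm_sub_le _ _
      _ ≤ 2 * M := by linarith [hM (t - v), hM t]
    · rw [Set.indicator_of_notMem ht]
      have h1 : g t = 0 := by
        by_contra hne
        exact ht (Metric.self_subset_cthickening _ (subset_tsupport g hne))
      have h2 : g (t - v) = 0 := by
        by_contra hne
        refine ht ?_
        have hmem : t - v ∈ tsupport g := subset_tsupport g hne
        have : dist t (t - v) ≤ 1 := by
          rw [Real.dist_eq]
          simp only [sub_sub_cancel]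
          rw [Metric.mem_ball, Real.dist_eq, sub_zero] at hv
          exact le_of_lt hv
        exact Metric.mem_cthickening_of_dist_le t (t - v) 1 _ hmem this
      simp [h1, h2]
  · rw [integrable_indicator_iff hK.measurableSet]
    exact integrableOn_const hK.measure_lt_top.ne
  · refine Eventually.of_forall fun t => ?_
    have : Tendsto (fun v : ℝ => g (t - v)) (𝓝 0) (𝓝 (g t)) := by
      have hc : Continuous (fun v : ℝ => g (t - v)) :=
        hgc.comp ((continuous_const (y := t)).sub continuous_id)
      have := hc.tendsto (0 : ℝ)
      simpa using this
    have h : Tendsto (fun v : ℝ => ‖g (t - v) - g t‖) (𝓝 0) (𝓝 ‖g t - g t‖) :=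
      (this.sub (tendsto_const_nhds (x := g t))).norm
    simpa using h

/-- continuity of translation in L¹ -/
lemma tendsto_translation {f : ℝ → ℂ} (hf : Integrable f) :
    Tendsto (fun v : ℝ => ∫ t, ‖f (t - v) - f t‖) (𝓝 0) (𝓝 0) := by
  rw [Metric.tendsto_nhds]
  intro ε hε
  obtain ⟨g, hgs, hgint, hgc, hgi⟩ :=
    hf.exists_hasCompactSupport_integral_sub_le (show (0:ℝ) < ε/4 by linarith)
  have hcont := tendsto_translation_cont hgc hgs
  have hev : ∀ᶠ v : ℝ in 𝓝 0, (∫ t, ‖g (t - v) - g t‖) < ε / 4 := by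
    have := Metric.tendsto_nhds.mp hcont (ε/4) (by linarith)
    filter_upwards [this] with v hv
    rw [Real.dist_eq, sub_zero] at hv
    exact lt_of_abs_lt hv
  filter_upwards [hev] with v hv
  rw [Real.dist_eq, sub_zero]
  have hle : (∫ t, ‖f (t - v) - f t‖)
      ≤ (∫ t, ‖f (t - v) - g (t - v)‖) + (∫ t, ‖g (t - v) - g t‖) + ∫ t, ‖g t - f t‖ := by
    have hi1 : Integrable (fun t => ‖f (t - v) - g (t - v)‖) :=
      ((hf.sub hgi).norm).comp_sub_right v
    have hi2 : Integrable (fun t => ‖g (t - v) - g t‖) :=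
      ((hgi.comp_sub_right v).sub hgi).norm
    have hi3 : Integrable (fun t => ‖g t - f t‖) := (hgi.sub hf).norm
    calc (∫ t, ‖f (t - v) - f t‖)
        ≤ ∫ t, (‖f (t - v) - g (t - v)‖ + ‖g (t - v) - g t‖ + ‖g t - f t‖) := by
          refine integral_mono ((hf.comp_sub_right v).sub hf).norm
            ((hi1.add hi2).add hi3) fun t => ?_
          calc ‖f (t - v) - f t‖
              = ‖(f (t - v) - g (t - v)) + (g (t - v) - g t) + (g t - f t)‖ := by ring_nf
          _ ≤ _ := norm_add₃_le
      _ = _ := by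
          have hi12 : Integrable (fun t : ℝ =>
              ‖f (t - v) - g (t - v)‖ + ‖g (t - v) - g t‖) := hi1.add hi2
          simp only [integral_add hi12 hi3, integral_add hi1 hi2]
  have he1 : (∫ t, ‖f (t - v) - g (t - v)‖) = ∫ t, ‖f t - g t‖ :=
    integral_sub_right_eq_self (fun t => ‖f t - g t‖) v
  have he3 : (∫ t, ‖g t - f t‖) = ∫ t, ‖f t - g t‖ := by
    simp_rw [norm_sub_rev (g _)]
  have habs : |∫ t, ‖f (t - v) - f t‖| = ∫ t, ‖f (t - v) - f t‖ :=
    abs_of_nonneg (integral_nonneg fun t => norm_nonneg _)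
  rw [habs]
  calc (∫ t, ‖f (t - v) - f t‖) ≤ _ := hle
  _ < ε := by rw [he1, he3]; linarith



/-- The chirp factor of `Atrans`. -/
noncomputable def ch (a b s t : ℝ) : ℂ :=
  Complex.exp (-Complex.I * ((a : ℂ) / b) * s * ((t : ℂ) - s))

lemma ch_norm (a b s t : ℝ) : ‖ch a b s t‖ = 1 := norm_atrans_exp a b s t

lemma ch_cont (a b t : ℝ) : Continuous (fun s => ch a b s t) := by
  unfold ch
  exact Complex.continuous_exp.comp (by fun_prop)

lemma ch_cont' (a b s : ℝ) : Continuous (fun t => ch a b s t) := by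
  unfold ch
  exact Complex.continuous_exp.comp (by fun_prop)

lemma atrans_L1_tendsto (a b : ℝ) {f : ℝ → ℂ} (hf : Integrable f) (x : ℝ) :
    Tendsto (fun s => ∫ t, ‖Atrans a b s f t - Atrans a b x f t‖) (𝓝 x) (𝓝 0) := by
  -- term 1 : translation part
  have h1 : Tendsto (fun s => ∫ t, ‖f (t - s) - f (t - x)‖) (𝓝 x) (𝓝 0) := by
    have hcomp : Tendsto (fun s : ℝ => s - x) (𝓝 x) (𝓝 0) := by
      have hc : Continuous (fun s : ℝ => s - x) := by fun_prop
      have := hc.tendsto x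
      simpa using this
    have h := (tendsto_translation (hf.comp_sub_right x)).comp hcomp
    have heq : (fun s => ∫ t, ‖f (t - s) - f (t - x)‖)
        = (fun v : ℝ => ∫ t, ‖f (t - v - x) - f (t - x)‖) ∘ (fun s : ℝ => s - x) := by
      funext s
      simp only [Function.comp_apply]
      congr 1
      funext t
      congr 2
      ring_nf
    rw [heq]
    exact h
  -- term 2 : modulation part
  have h2 : Tendsto (fun s => ∫ t, ‖(ch a b s t - ch a b x t) * f (t - x)‖) (𝓝 x) (𝓝 0) := by
    have := tendsto_integral_filter_of_dominated_convergence (μ := (volume : Measure ℝ))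
      (F := fun (s : ℝ) (t : ℝ) => ‖(ch a b s t - ch a b x t) * f (t - x)‖)
      (f := fun _ => (0 : ℝ))
      (bound := fun t => 2 * ‖f (t - x)‖) (l := 𝓝 x)
      (Eventually.of_forall fun s =>
        (((((ch_cont' a b s).sub (ch_cont' a b x))).aestronglyMeasurable.mul
          (hf.comp_sub_right x).1).norm))
      (Eventually.of_forall fun s => Eventually.of_forall fun t => by
        rw [Real.norm_of_nonneg (norm_nonneg _), norm_mul]
        have hch : ∀ u : ℝ, ‖ch a b u t‖ = 1 := fun u => ch_norm a b u t
        calc ‖ch a b s t - ch a b x t‖ * ‖f (t - x)‖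
            ≤ (‖ch a b s t‖ + ‖ch a b x t‖) * ‖f (t - x)‖ :=
              mul_le_mul_of_nonneg_right (norm_sub_le _ _) (norm_nonneg _)
        _ = 2 * ‖f (t - x)‖ := by rw [hch, hch]; ring)
      (((hf.comp_sub_right x).norm).const_mul 2)
      (Eventually.of_forall fun t => by
        have hc : Tendsto (fun s => ch a b s t) (𝓝 x) (𝓝 (ch a b x t)) :=
          (ch_cont a b t).tendsto x
        have h := ((hc.sub (tendsto_const_nhds (x := ch a b x t))).mul
          (tendsto_const_nhds (x := f (t - x)))).norm
        simpa using h)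
    simpa using this
  -- combine
  have hbound : ∀ s, (∫ t, ‖Atrans a b s f t - Atrans a b x f t‖)
      ≤ (∫ t, ‖f (t - s) - f (t - x)‖) + ∫ t, ‖(ch a b s t - ch a b x t) * f (t - x)‖ := by
    intro s
    have hi1 : Integrable (fun t => ‖f (t - s) - f (t - x)‖) :=
      ((hf.comp_sub_right s).sub (hf.comp_sub_right x)).norm
    have hi2 : Integrable (fun t => ‖(ch a b s t - ch a b x t) * f (t - x)‖) := by
      refine (Integrable.bdd_mul (hf.comp_sub_right x)
        (((ch_cont' a b s).sub (ch_cont' a b x))).aestronglyMeasurable (c := 2) (Eventually.of_forall fun t => ?_)).norm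
      calc ‖ch a b s t - ch a b x t‖ ≤ ‖ch a b s t‖ + ‖ch a b x t‖ := norm_sub_le _ _
      _ ≤ 2 := by
          rw [ch_norm a b s t, ch_norm a b x t]; norm_num
    calc (∫ t, ‖Atrans a b s f t - Atrans a b x f t‖)
        ≤ ∫ t, (‖f (t - s) - f (t - x)‖ + ‖(ch a b s t - ch a b x t) * f (t - x)‖) := by
          refine integral_mono ((atrans_integrable a b s hf).sub
            (atrans_integrable a b x hf)).norm (hi1.add hi2) fun t => ?_
          have hsplit : Atrans a b s f t - Atrans a b x f t
              = ch a b s t * (f (t - s) - f (t - x)) + (ch a b s t - ch a b x t) * f (t - x) := by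
            rw [Atrans, Atrans, ch, ch]; ring
          rw [hsplit]
          calc ‖ch a b s t * (f (t - s) - f (t - x)) + (ch a b s t - ch a b x t) * f (t - x)‖
              ≤ ‖ch a b s t * (f (t - s) - f (t - x))‖
                + ‖(ch a b s t - ch a b x t) * f (t - x)‖ := norm_add_le _ _
          _ ≤ _ := by
              rw [norm_mul, ch_norm a b s t, one_mul]
    _ = _ := integral_add hi1 hi2
  have hnonneg : ∀ s, 0 ≤ ∫ t, ‖Atrans a b s f t - Atrans a b x f t‖ :=
    fun s => integral_nonneg fun t => norm_nonneg _
  have hsum : Tendsto (fun s => (∫ t, ‖f (t - s) - f (t - x)‖)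
      + ∫ t, ‖(ch a b s t - ch a b x t) * f (t - x)‖) (𝓝 x) (𝓝 0) := by
    have := h1.add h2
    simpa using this
  exact squeeze_zero hnonneg hbound hsum



lemma trans_invariant_of_ideal {a b : ℝ} (hb : b ≠ 0)
    (J : Set (ℝ → ℂ))
    (hJint : ∀ f ∈ J, Integrable f)
    (hJsmul : ∀ (c : ℂ), ∀ f ∈ J, c • f ∈ J)
    (hJclosed : ∀ f : ℝ → ℂ, Integrable f →
      (∀ ε > (0 : ℝ), ∃ g ∈ J, (∫ t : ℝ, ‖f t - g t‖) < ε) → f ∈ J)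
    (hIdeal : ∀ g : ℝ → ℂ, Integrable g → ∀ f ∈ J, convA a b g f ∈ J) :
    ∀ f ∈ J, ∀ x : ℝ, Atrans a b x f ∈ J := by
  intro f hfJ x
  have hf := hJint f hfJ
  refine hJclosed _ (atrans_integrable a b x hf) fun ε hε => ?_
  have hev : ∀ᶠ s in 𝓝 x, (∫ t, ‖Atrans a b s f t - Atrans a b x f t‖) < ε / 2 := by
    have := Metric.tendsto_nhds.mp (atrans_L1_tendsto a b hf x) (ε / 2) (by linarith)
    filter_upwards [this] with s hs
    rw [Real.dist_eq, sub_zero] at hs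
    exact lt_of_abs_lt hs
  obtain ⟨δ, hδpos, hδ⟩ := Metric.eventually_nhds_iff.mp hev
  set r := δ / 2 with hr
  have hrpos : 0 < r := by positivity
  set E := Set.Ioc x (x + r) with hEdef
  have hEmeas : MeasurableSet E := measurableSet_Ioc
  have hEvol : volume E = ENNReal.ofReal r := by
    rw [hEdef, Real.volume_Ioc]; congr 1; ring
  set gr : ℝ → ℂ := E.indicator (fun _ => ((r : ℂ))⁻¹) with hgrdef
  have hgrint : Integrable gr := by
    rw [hgrdef, integrable_indicator_iff hEmeas]
    exact integrableOn_const (by rw [hEvol]; exact ENNReal.ofReal_ne_top)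
  set q : ℝ → ℂ := fun t => ∫ s, gr s * Atrans a b s f t with hqdef
  have hsne : ((Real.sqrt (2 * Real.pi * |b|) : ℝ) : ℂ) ≠ 0 := by
    have h1 : (0:ℝ) < 2 * Real.pi * |b| :=
      mul_pos (mul_pos two_pos Real.pi_pos) (abs_pos.mpr hb)
    have : (0:ℝ) < Real.sqrt (2 * Real.pi * |b|) := Real.sqrt_pos.mpr h1
    exact_mod_cast this.ne'
  have hqJ : q ∈ J := by
    have h2 := hJsmul ((Real.sqrt (2 * Real.pi * |b|) : ℝ) : ℂ) _ (hIdeal gr hgrint f hfJ)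
    have heq : ((Real.sqrt (2 * Real.pi * |b|) : ℝ) : ℂ) • convA a b gr f = q := by
      funext t
      simp only [Pi.smul_apply, smul_eq_mul, convA, hqdef]
      rw [← mul_assoc, mul_inv_cancel₀ hsne, one_mul]
    rwa [heq] at h2
  have hFi := prod_integrable (a := a) hb hgrint hf
  have hqint : Integrable q := hFi.integral_prod_left
  have hae : ∀ᵐ t : ℝ, Integrable (fun s => gr s * Atrans a b s f t) := hFi.prod_right_ae
  have hgr1 : (∫ s, gr s) = 1 := by
    rw [hgrdef, integral_indicator hEmeas, setIntegral_const, measureReal_def, hEvol,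
      ENNReal.toReal_ofReal hrpos.le, Complex.real_smul,
      mul_inv_cancel₀ (Complex.ofReal_ne_zero.mpr hrpos.ne')]
  have hG2 : Integrable (fun p : ℝ × ℝ => gr p.2 * Atrans a b x f p.1)
      ((volume : Measure ℝ).prod volume) :=
    ((atrans_integrable a b x hf).mul_prod hgrint).congr
      (Eventually.of_forall fun p => mul_comm _ _)
  have hB : Integrable (fun p : ℝ × ℝ => gr p.2 * (Atrans a b x f p.1 - Atrans a b p.2 f p.1))
      ((volume : Measure ℝ).prod volume) :=
    (hG2.sub hFi).congr (Eventually.of_forall fun p => by simp only [Pi.sub_apply]; ring)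
  have hBn := hB.integral_norm_prod_left
  have hH : Integrable (fun s => ∫ t, ‖gr s * (Atrans a b x f t - Atrans a b s f t)‖) :=
    hB.swap.integral_norm_prod_left
  refine ⟨q, hqJ, ?_⟩
  have key1 : (∫ t, ‖Atrans a b x f t - q t‖)
      ≤ ∫ t, ∫ s, ‖gr s * (Atrans a b x f t - Atrans a b s f t)‖ := by
    refine integral_mono_ae ((atrans_integrable a b x hf).sub hqint).norm hBn ?_
    filter_upwards [hae] with t ht
    have hgrx : Integrable (fun s => gr s * Atrans a b x f t) := hgrint.mul_const _
    have heq : Atrans a b x f t - q t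
        = ∫ s, gr s * (Atrans a b x f t - Atrans a b s f t) := by
      have h1 : (fun s => gr s * (Atrans a b x f t - Atrans a b s f t))
          = fun s => gr s * Atrans a b x f t - gr s * Atrans a b s f t :=
        funext fun s => by ring
      rw [h1, integral_sub hgrx ht, integral_mul_const, hgr1, one_mul, hqdef]
    rw [heq]
    exact norm_integral_le_integral_norm _
  have key2 : (∫ t, ∫ s, ‖gr s * (Atrans a b x f t - Atrans a b s f t)‖)
      = ∫ s, ∫ t, ‖gr s * (Atrans a b x f t - Atrans a b s f t)‖ :=
    integral_integral_swap hB.norm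
  have key3 : (∫ s, ∫ t, ‖gr s * (Atrans a b x f t - Atrans a b s f t)‖) ≤ ε / 2 := by
    have hind : Integrable (E.indicator (fun _ => r⁻¹ * (ε / 2))) := by
      rw [integrable_indicator_iff hEmeas]
      exact integrableOn_const (by rw [hEvol]; exact ENNReal.ofReal_ne_top)
    have hHb : ∀ s, (∫ t, ‖gr s * (Atrans a b x f t - Atrans a b s f t)‖)
        ≤ E.indicator (fun _ => r⁻¹ * (ε / 2)) s := by
      intro s
      by_cases hs : s ∈ E
      · rw [Set.indicator_of_mem hs]
        have hgrs : gr s = (r : ℂ)⁻¹ := Set.indicator_of_mem hs _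
        have hnorm : ∀ t, ‖gr s * (Atrans a b x f t - Atrans a b s f t)‖
            = r⁻¹ * ‖Atrans a b s f t - Atrans a b x f t‖ := fun t => by
          rw [hgrs, norm_mul, norm_inv, Complex.norm_real, Real.norm_of_nonneg hrpos.le,
            norm_sub_rev]
        simp_rw [hnorm]
        rw [integral_const_mul]
        have hdist : dist s x < δ := by
          rw [Real.dist_eq]
          rcases hs with ⟨hs1, hs2⟩
          rw [abs_of_pos (by linarith)]
          have : r < δ := by rw [hr]; linarith
          linarith
        have hDs := hδ hdist
        have hinv : (0:ℝ) ≤ r⁻¹ := inv_nonneg.mpr hrpos.le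
        exact mul_le_mul_of_nonneg_left hDs.le hinv
      · rw [Set.indicator_of_notMem hs]
        have hgrs : gr s = 0 := Set.indicator_of_notMem hs _
        simp [hgrs]
    calc (∫ s, ∫ t, ‖gr s * (Atrans a b x f t - Atrans a b s f t)‖)
        ≤ ∫ s, E.indicator (fun _ => r⁻¹ * (ε / 2)) s := integral_mono hH hind hHb
    _ = (volume E).toReal • (r⁻¹ * (ε / 2)) := by
        rw [integral_indicator_const _ hEmeas, measureReal_def]
    _ = ε / 2 := by
        rw [hEvol, ENNReal.toReal_ofReal hrpos.le, smul_eq_mul, ← mul_assoc,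
          mul_inv_cancel₀ hrpos.ne', one_mul]
  calc (∫ t, ‖Atrans a b x f t - q t‖) ≤ _ := key1
  _ = _ := key2
  _ ≤ ε / 2 := key3
  _ < ε := by linarith



lemma ideal_of_trans_invariant {a b : ℝ} (hb : b ≠ 0)
    (J : Set (ℝ → ℂ))
    (hJint : ∀ f ∈ J, Integrable f)
    (hJzero : (0 : ℝ → ℂ) ∈ J)
    (hJadd : ∀ f ∈ J, ∀ g ∈ J, f + g ∈ J)
    (hJsmul : ∀ (c : ℂ), ∀ f ∈ J, c • f ∈ J)
    (hJclosed : ∀ f : ℝ → ℂ, Integrable f →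
      (∀ ε > (0 : ℝ), ∃ g ∈ J, (∫ t : ℝ, ‖f t - g t‖) < ε) → f ∈ J)
    (hTrans : ∀ f ∈ J, ∀ x : ℝ, Atrans a b x f ∈ J) :
    ∀ g : ℝ → ℂ, Integrable g → ∀ f ∈ J, convA a b g f ∈ J := by
  have sat : ∀ (h k : ℝ → ℂ), Integrable h → k ∈ J → h =ᵐ[volume] k → h ∈ J := by
    intro h k hh hkJ hhk
    refine hJclosed h hh fun ε hε => ⟨k, hkJ, ?_⟩
    have hz : (fun t => ‖h t - k t‖) =ᵐ[volume] (fun _ => (0 : ℝ)) :=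
      hhk.mono fun t ht => by simp [ht]
    rw [integral_congr_ae hz, integral_zero]
    exact hε
  intro g hg f hfJ
  have hf := hJint f hfJ
  set S : Submodule ℂ (Lp ℂ 1 (volume : Measure ℝ)) :=
    { carrier := {h | (↑↑h : ℝ → ℂ) ∈ J}
      add_mem' := fun {h k} hh hk =>
        sat _ _ (L1.integrable_coeFn _) (hJadd _ hh _ hk) (Lp.coeFn_add h k)
      zero_mem' := sat _ _ (L1.integrable_coeFn _) hJzero (Lp.coeFn_zero ℂ 1 _)
      smul_mem' := fun c h hh =>
        sat _ _ (L1.integrable_coeFn _) (hJsmul c _ hh) (Lp.coeFn_smul c h) } with hSdef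
  have hSmem : ∀ h : Lp ℂ 1 (volume : Measure ℝ), h ∈ S ↔ (↑↑h : ℝ → ℂ) ∈ J :=
    fun h => Iff.rfl
  have hSclosed : IsClosed (S : Set (Lp ℂ 1 (volume : Measure ℝ))) := by
    refine isClosed_of_closure_subset fun h hh => ?_
    refine hJclosed _ (L1.integrable_coeFn h) fun ε hε => ?_
    obtain ⟨k, hkS, hk⟩ := Metric.mem_closure_iff.mp hh ε hε
    refine ⟨(↑↑k : ℝ → ℂ), hkS, ?_⟩
    have h1 : ‖h - k‖ = ∫ t, ‖(↑↑h : ℝ → ℂ) t - (↑↑k : ℝ → ℂ) t‖ := by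
      rw [L1.norm_eq_integral_norm]
      refine integral_congr_ae ?_
      filter_upwards [Lp.coeFn_sub h k] with t ht
      rw [ht, Pi.sub_apply]
    rw [← h1]
    rw [dist_eq_norm] at hk
    exact hk
  have hA : ∀ s : ℝ, Integrable (Atrans a b s f) := fun s => atrans_integrable a b s hf
  set Φ : ℝ → Lp ℂ 1 (volume : Measure ℝ) := fun s => (hA s).toL1 _ with hΦdef
  have hΦS : ∀ s, Φ s ∈ S := fun s =>
    sat _ _ (L1.integrable_coeFn _) (hTrans f hfJ s) ((hA s).coeFn_toL1)
  have hΦcont : Continuous Φ := by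
    rw [continuous_iff_continuousAt]
    intro x
    rw [ContinuousAt, Metric.tendsto_nhds]
    intro ε hε
    filter_upwards [(atrans_L1_tendsto a b hf x).eventually_lt_const hε] with s hs
    have hdist : dist (Φ s) (Φ x) = ∫ t, ‖Atrans a b s f t - Atrans a b x f t‖ := by
      rw [dist_eq_norm, hΦdef]
      rw [← Integrable.toL1_sub _ _ (hA s) (hA x), L1.norm_of_fun_eq_integral_norm]
      simp only [Pi.sub_apply]
    rw [hdist]
    exact hs
  set G : ℝ → Lp ℂ 1 (volume : Measure ℝ) := fun s => g s • Φ s with hGdef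
  have hGsm : AEStronglyMeasurable G volume :=
    hg.aestronglyMeasurable.smul hΦcont.aestronglyMeasurable
  have hΦnorm : ∀ s, ‖Φ s‖ = ∫ t, ‖f t‖ := fun s => by
    rw [hΦdef, L1.norm_of_fun_eq_integral_norm]
    exact atrans_norm_integral a b s f
  have hGi : Integrable G volume := by
    refine Integrable.mono' (hg.norm.mul_const (∫ t, ‖f t‖)) hGsm ?_
    refine Eventually.of_forall fun s => ?_
    rw [hGdef, norm_smul, hΦnorm s]
  set I0 : Lp ℂ 1 (volume : Measure ℝ) := ∫ s, G s with hI0def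
  have hI0S : I0 ∈ S := by
    by_contra hmem
    have hconv : Convex ℝ (S : Set (Lp ℂ 1 (volume : Measure ℝ))) := by
      have := (S.restrictScalars ℝ).convex
      simpa using this
    obtain ⟨ψ, u, hu1, hu2⟩ := geometric_hahn_banach_point_closed hconv hSclosed hmem
    have hψ0 : ∀ y ∈ S, ψ y = 0 := by
      intro y hy
      by_contra hne
      have hcy : ((u - 1) / ψ y) • y ∈ S := by
        have h1 : (((u - 1) / ψ y : ℝ) : ℂ) • y ∈ S := S.smul_mem _ hy
        rwa [show (((u - 1) / ψ y : ℝ) : ℂ) • y = ((u - 1) / ψ y) • y by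
          rw [← smul_one_smul ℂ ((u - 1) / ψ y) y]
          norm_num] at h1
      have h2 := hu2 _ hcy
      rw [ContinuousLinearMap.map_smul, smul_eq_mul, div_mul_cancel₀ _ hne] at h2
      linarith
    have hu0 : u < 0 := by simpa [hψ0 0 S.zero_mem] using hu2 0 S.zero_mem
    have hI0z : ψ I0 = 0 := by
      rw [hI0def, ← ContinuousLinearMap.integral_comp_comm ψ hGi]
      have hz : ∀ s, ψ (G s) = 0 := fun s => hψ0 _ (S.smul_mem _ (hΦS s))
      simp [hz]
    linarith
  -- the set-integral functionals
  have hsetCLM : ∀ (E : Set ℝ), MeasurableSet E →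
      ∃ φ : Lp ℂ 1 (volume : Measure ℝ) →L[ℂ] ℂ,
        ∀ h : Lp ℂ 1 (volume : Measure ℝ), φ h = ∫ t in E, (↑↑h : ℝ → ℂ) t := by
    intro E hE
    have hbound : ∀ h : Lp ℂ 1 (volume : Measure ℝ),
        ‖∫ t in E, (↑↑h : ℝ → ℂ) t‖ ≤ 1 * ‖h‖ := by
      intro h
      rw [one_mul, L1.norm_eq_integral_norm]
      calc ‖∫ t in E, (↑↑h : ℝ → ℂ) t‖ ≤ ∫ t in E, ‖(↑↑h : ℝ → ℂ) t‖ :=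
        norm_integral_le_integral_norm _
      _ ≤ ∫ t, ‖(↑↑h : ℝ → ℂ) t‖ :=
        setIntegral_le_integral (L1.integrable_coeFn h).norm
          (Eventually.of_forall fun t => norm_nonneg _)
    refine ⟨LinearMap.mkContinuous
      { toFun := fun h => ∫ t in E, (↑↑h : ℝ → ℂ) t
        map_add' := fun h k => ?_
        map_smul' := fun c h => ?_ } 1 hbound, fun h => rfl⟩
    · show (∫ t in E, (↑↑(h + k) : ℝ → ℂ) t) = (∫ t in E, (↑↑h : ℝ → ℂ) t) + ∫ t in E, (↑↑k : ℝ → ℂ) t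
      have h1 : (↑↑(h + k) : ℝ → ℂ) =ᵐ[volume.restrict E] (↑↑h : ℝ → ℂ) + ↑↑k :=
        ae_restrict_of_ae (Lp.coeFn_add h k)
      rw [integral_congr_ae h1]
      simp only [Pi.add_apply]
      exact integral_add (L1.integrable_coeFn h).integrableOn (L1.integrable_coeFn k).integrableOn
    · show (∫ t in E, (↑↑(c • h) : ℝ → ℂ) t) = (RingHom.id ℂ) c • ∫ t in E, (↑↑h : ℝ → ℂ) t
      have h1 : (↑↑(c • h) : ℝ → ℂ) =ᵐ[volume.restrict E] c • (↑↑h : ℝ → ℂ) :=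
        ae_restrict_of_ae (Lp.coeFn_smul c h)
      rw [integral_congr_ae h1]
      simp only [Pi.smul_apply, smul_eq_mul, RingHom.id_apply]
      exact integral_const_mul c _
  have hFprod := prod_integrable (a := a) hb hg hf
  have hpoint : Integrable (fun t => ∫ s, g s * Atrans a b s f t) := hFprod.integral_prod_left
  have hcoe : (↑↑I0 : ℝ → ℂ) =ᵐ[volume] fun t => ∫ s, g s * Atrans a b s f t := by
    refine ae_eq_of_forall_setIntegral_eq_of_sigmaFinite
      (fun E hE _ => (L1.integrable_coeFn I0).integrableOn)
      (fun E hE _ => hpoint.integrableOn)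
      (fun E hE hEfin => ?_)
    obtain ⟨φ, hφ⟩ := hsetCLM E hE
    have step1 : ∫ t in E, (↑↑I0 : ℝ → ℂ) t = ∫ s, φ (G s) := by
      rw [← hφ I0, hI0def, ← ContinuousLinearMap.integral_comp_comm φ hGi]
    have step2 : ∀ s, φ (G s) = g s * ∫ t in E, Atrans a b s f t := by
      intro s
      rw [hφ]
      have h1 : (↑↑(G s) : ℝ → ℂ) =ᵐ[volume.restrict E] fun t => g s * Atrans a b s f t := by
        refine ae_restrict_of_ae ?_
        refine (Lp.coeFn_smul (g s) (Φ s)).trans ?_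
        filter_upwards [(hA s).coeFn_toL1] with t ht
        simp only [Pi.smul_apply, smul_eq_mul, hΦdef]
        rw [ht]
      rw [integral_congr_ae h1, integral_const_mul]
    simp_rw [step2] at step1
    rw [step1]
    have hres : Integrable (fun p : ℝ × ℝ => g p.2 * Atrans a b p.2 f p.1)
        (((volume : Measure ℝ).restrict E).prod volume) := by
      have h2 := hFprod.restrict (s := E ×ˢ Set.univ)
      rwa [← Measure.prod_restrict, Measure.restrict_univ] at h2
    have hswap := integral_integral_swap (f := fun t s => g s * Atrans a b s f t)
      (μ := (volume : Measure ℝ).restrict E) (ν := volume) hres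
    rw [hswap]
    simp_rw [integral_const_mul]
  have hI0cS : ((Real.sqrt (2 * Real.pi * |b|) : ℝ) : ℂ)⁻¹ • I0 ∈ S :=
    S.smul_mem _ hI0S
  refine sat (convA a b g f) (↑↑(((Real.sqrt (2 * Real.pi * |b|) : ℝ) : ℂ)⁻¹ • I0)) ?_ hI0cS ?_
  · exact hpoint.const_mul _
  · refine EventuallyEq.symm ?_
    refine (Lp.coeFn_smul _ I0).trans ?_
    filter_upwards [hcoe] with t ht
    simp only [Pi.smul_apply, smul_eq_mul]
    rw [ht]
    rfl


end AtransAux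

/-- A closed subspace `J` of `L¹(ℝ)` is an ideal of `(L¹(ℝ), ⋆_A)` iff it is invariant
under all `A`-translations. -/
theorem ideal_iff_Atrans_invariant (a b : ℝ) (hb : b ≠ 0)
    (J : Set (ℝ → ℂ))
    (hJint : ∀ f ∈ J, Integrable f)
    (hJzero : (0 : ℝ → ℂ) ∈ J)
    (hJadd : ∀ f ∈ J, ∀ g ∈ J, f + g ∈ J)
    (hJsmul : ∀ (c : ℂ), ∀ f ∈ J, c • f ∈ J)
    (hJclosed : ∀ f : ℝ → ℂ, Integrable f →
      (∀ ε > (0 : ℝ), ∃ g ∈ J, (∫ t : ℝ, ‖f t - g t‖) < ε) → f ∈ J) :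
    (∀ g : ℝ → ℂ, Integrable g → ∀ f ∈ J, convA a b g f ∈ J) ↔
      (∀ f ∈ J, ∀ x : ℝ, Atrans a b x f ∈ J) := by
  constructor
  · intro hIdeal
    exact AtransAux.trans_invariant_of_ideal hb J hJint hJsmul hJclosed hIdeal
  · intro hTrans
    exact AtransAux.ideal_of_trans_invariant hb J hJint hJzero hJadd hJsmul hJclosed hTrans
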